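/- (Composition of pre-instruments.) Let A, B₁, B₂ be unital ℂ-algebras, Θ₁ : A ⊗ B₁ → A ⊗ B₁ and Θ₂ : A ⊗ B₂ → A ⊗ B₂ unital homomorphisms, and suppose the total scattering map Θ on A ⊗ B₁ ⊗ B₂ satisfies the causal factorisation Θ = (Θ₁ ⊗ id) ∘ (Θ₂ ⊗₂ id), where (Θ₂ ⊗₂ id) acts as Θ₂ on the A and B₂ factors. Then for all states σ₁ on B₁, σ₂ on B₂ and all E₁ ∈ B₁, E₂ ∈ B₂: I_{σ₂}(E₂) ∘ I_{σ₁}(E₁) = I_{σ₁⊗σ₂}(E₁ ⊗ E₂), where I_σ(F)(ω)(a) = (ω ⊗ σ)(Θ(a ⊗ F)). -/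

import Mathlib

open scoped TensorProduct ComplexOrder

/-- The product functional `ω ⊗ σ` on `A ⊗ B`. -/
noncomputable def tensorFun {A B : Type*} [Ring A] [Ring B] [Algebra ℂ A] [Algebra ℂ B]
    (ω : A →ₗ[ℂ] ℂ) (σ : B →ₗ[ℂ] ℂ) : A ⊗[ℂ] B →ₗ[ℂ] ℂ :=
  (TensorProduct.lid ℂ ℂ).toLinearMap ∘ₗ TensorProduct.map ω σ

/-- The pre-instrument `I_σ(F)(ω)(a) = (ω ⊗ σ)(Θ(a ⊗ F))`, as a linear functional. -/
noncomputable def preInstr {A B : Type*} [Ring A] [Ring B] [Algebra ℂ A] [Algebra ℂ B]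
    (Θ : A ⊗[ℂ] B →ₐ[ℂ] A ⊗[ℂ] B) (σ : B →ₗ[ℂ] ℂ) (F : B) (ω : A →ₗ[ℂ] ℂ) :
    A →ₗ[ℂ] ℂ :=
  tensorFun ω σ ∘ₗ Θ.toLinearMap ∘ₗ (TensorProduct.mk ℂ A B).flip F

/-- Reordering isomorphism `(A ⊗ B₁) ⊗ B₂ ≃ (A ⊗ B₂) ⊗ B₁`. -/
noncomputable def reorder (A B₁ B₂ : Type*) [Ring A] [Ring B₁] [Ring B₂]
    [Algebra ℂ A] [Algebra ℂ B₁] [Algebra ℂ B₂] :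
    (A ⊗[ℂ] B₁) ⊗[ℂ] B₂ ≃ₐ[ℂ] (A ⊗[ℂ] B₂) ⊗[ℂ] B₁ :=
  (Algebra.TensorProduct.assoc ℂ ℂ ℂ A B₁ B₂).trans
    ((Algebra.TensorProduct.congr AlgEquiv.refl (Algebra.TensorProduct.comm ℂ B₁ B₂)).trans
      (Algebra.TensorProduct.assoc ℂ ℂ ℂ A B₂ B₁).symm)

/-- The extension `Θ₂ ⊗₂ id` of `Θ₂ : A ⊗ B₂ → A ⊗ B₂`, acting as `Θ₂` on the `A` and
`B₂` factors of `(A ⊗ B₁) ⊗ B₂`. -/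
noncomputable def extend₂ {A B₁ B₂ : Type*} [Ring A] [Ring B₁] [Ring B₂]
    [Algebra ℂ A] [Algebra ℂ B₁] [Algebra ℂ B₂]
    (Θ₂ : A ⊗[ℂ] B₂ →ₐ[ℂ] A ⊗[ℂ] B₂) :
    (A ⊗[ℂ] B₁) ⊗[ℂ] B₂ →ₐ[ℂ] (A ⊗[ℂ] B₁) ⊗[ℂ] B₂ :=
  ((reorder A B₁ B₂).symm.toAlgHom.comp
    (Algebra.TensorProduct.map Θ₂ (AlgHom.id ℂ B₁))).comp (reorder A B₁ B₂).toAlgHom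

/-- Composition of pre-instruments for causally ordered coupling zones: under causal
factorisation `Θ = (Θ₁ ⊗ id) ∘ (Θ₂ ⊗₂ id)`, one has
`I_{σ₂}(E₂) ∘ I_{σ₁}(E₁) = I_{σ₁⊗σ₂}(E₁ ⊗ E₂)`. -/
theorem preInstr_composition {A B₁ B₂ : Type*} [Ring A] [Ring B₁] [Ring B₂]
    [Algebra ℂ A] [Algebra ℂ B₁] [Algebra ℂ B₂]
    [StarRing B₁] [StarModule ℂ B₁] [StarRing B₂] [StarModule ℂ B₂]
    (Θ₁ : A ⊗[ℂ] B₁ →ₐ[ℂ] A ⊗[ℂ] B₁) (Θ₂ : A ⊗[ℂ] B₂ →ₐ[ℂ] A ⊗[ℂ] B₂)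
    (Θ : (A ⊗[ℂ] B₁) ⊗[ℂ] B₂ →ₐ[ℂ] (A ⊗[ℂ] B₁) ⊗[ℂ] B₂)
    (hfact : Θ = (Algebra.TensorProduct.map Θ₁ (AlgHom.id ℂ B₂)).comp (extend₂ Θ₂))
    (σ₁ : B₁ →ₗ[ℂ] ℂ) (hσ₁1 : σ₁ 1 = 1) (hσ₁pos : ∀ b, 0 ≤ σ₁ (star b * b))
    (σ₂ : B₂ →ₗ[ℂ] ℂ) (hσ₂1 : σ₂ 1 = 1) (hσ₂pos : ∀ b, 0 ≤ σ₂ (star b * b))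
    (E₁ : B₁) (E₂ : B₂) :
    ∀ (ω : A →ₗ[ℂ] ℂ) (a : A),
      preInstr Θ₂ σ₂ E₂ (preInstr Θ₁ σ₁ E₁ ω) a =
        tensorFun (tensorFun ω σ₁) σ₂ (Θ ((a ⊗ₜ[ℂ] E₁) ⊗ₜ[ℂ] E₂)) := by
  subst hfact
  intro ω a
  have key : ∀ x : A ⊗[ℂ] B₂,
      tensorFun (preInstr Θ₁ σ₁ E₁ ω) σ₂ x =
      tensorFun (tensorFun ω σ₁) σ₂
        ((Algebra.TensorProduct.map Θ₁ (AlgHom.id ℂ B₂))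
          ((reorder A B₁ B₂).symm (x ⊗ₜ[ℂ] E₁))) := by
    intro x
    induction x using TensorProduct.induction_on with
    | zero => simp [TensorProduct.zero_tmul]
    | tmul c d => simp [reorder, tensorFun, preInstr]
    | add u v hu hv =>
        rw [TensorProduct.add_tmul, map_add, map_add, map_add, hu, hv, map_add]
  have lhs : preInstr Θ₂ σ₂ E₂ (preInstr Θ₁ σ₁ E₁ ω) a =
      tensorFun (preInstr Θ₁ σ₁ E₁ ω) σ₂ (Θ₂ (a ⊗ₜ[ℂ] E₂)) := rfl
  have hre : (reorder A B₁ B₂) ((a ⊗ₜ[ℂ] E₁) ⊗ₜ[ℂ] E₂) = (a ⊗ₜ[ℂ] E₂) ⊗ₜ[ℂ] E₁ := by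
    simp [reorder]
  rw [lhs, key (Θ₂ (a ⊗ₜ[ℂ] E₂))]
  simp [extend₂, hre]
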